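/- Let G be a group, θ ∈ G with θ³ = 1, and H a subgroup of G such that every element of H commutes with θ and the centralizer of θ in G is contained in H ∪ Hθ ∪ Hθ². Let Q be a subgroup of H that equals its own centralizer in H (i.e. Q is abelian and every element of H commuting with all of Q lies in Q). Then every element g ∈ G that commutes with θ and with every element of Q belongs to the subgroup of G generated by Q ∪ {θ}. (Group-theoretic content of: for any maximal quasitorus Q of Aut(S), the group generated by Q and the triality element θ_S is a maximal quasitorus of Aut(𝔡₄).) -/
import Mathlib


open scoped Pointwise

/-- Group-theoretic content of Corollary: if `θ³ = 1`, `H` centralizes `θ`, the centralizer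
of `θ` in `G` is contained in `H ∪ Hθ ∪ Hθ²`, and `Q` is a self-centralizing abelian
subgroup of `H`, then any `g ∈ G` commuting with `θ` and with all of `Q` lies in the
subgroup generated by `Q` and `θ`. (Hence `⟨Q, θ⟩` is a maximal abelian subgroup.) -/
theorem mixing_with_triality_maximal {G : Type*} [Group G]
    (θ : G) (hθ : θ ^ 3 = 1)
    (H : Subgroup G) (hHθ : ∀ h ∈ H, h * θ = θ * h)
    (hcent : ∀ g : G, g * θ = θ * g →
      g ∈ (H : Set G) ∪ (H : Set G) * {θ} ∪ (H : Set G) * {θ ^ 2})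
    (Q : Subgroup G) (hQH : Q ≤ H)
    (hQab : ∀ a ∈ Q, ∀ b ∈ Q, a * b = b * a)
    (hQsc : ∀ h ∈ H, (∀ q ∈ Q, h * q = q * h) → h ∈ Q)
    (g : G) (hgθ : g * θ = θ * g) (hgQ : ∀ q ∈ Q, g * q = q * g) :
    g ∈ Subgroup.closure ((Q : Set G) ∪ {θ}) := by
  have hθmem : θ ∈ Subgroup.closure ((Q : Set G) ∪ {θ}) :=
    Subgroup.subset_closure (Set.mem_union_right _ rfl)
  have hQmem : ∀ q ∈ Q, q ∈ Subgroup.closure ((Q : Set G) ∪ {θ}) := fun q hq =>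
    Subgroup.subset_closure (Set.mem_union_left _ hq)
  have key : ∀ h ∈ H, ∀ k : G, g = h * k → (∀ q ∈ Q, k * q = q * k) → h ∈ Q := by
    intro h hh k hgk hk
    apply hQsc h hh
    intro q hq
    have hgq := hgQ q hq
    rw [hgk] at hgq
    have h1 : h * (k * q) = q * (h * k) := by rw [← mul_assoc, hgq]
    rw [hk q hq] at h1
    have h2 : h * q * k = q * h * k := by rw [mul_assoc, mul_assoc]; exact h1
    exact mul_right_cancel h2
  have hθQ : ∀ q ∈ Q, θ * q = q * θ := fun q hq => (hHθ q (hQH hq)).symm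
  rcases hcent g hgθ with (hg | hg) | hg
  · exact hQmem g (hQsc g hg hgQ)
  · rw [Set.mem_mul] at hg
    obtain ⟨h, hh, t, ht, heq⟩ := hg
    rw [Set.mem_singleton_iff] at ht
    subst heq; rw [ht]
    exact mul_mem (hQmem h (key h hh θ (by rw [ht]) hθQ)) hθmem
  · rw [Set.mem_mul] at hg
    obtain ⟨h, hh, t, ht, heq⟩ := hg
    rw [Set.mem_singleton_iff] at ht
    subst heq; rw [ht]
    have hθ2Q : ∀ q ∈ Q, θ ^ 2 * q = q * θ ^ 2 := by
      intro q hq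
      have hc := hθQ q hq
      rw [pow_two, mul_assoc, hc, ← mul_assoc, hc, mul_assoc]
    exact mul_mem (hQmem h (key h hh (θ ^ 2) (by rw [ht]) hθ2Q)) (pow_mem hθmem 2)
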